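/- Let G be a Hausdorff topological group. If the translation action map G × C G → C G, (g, [x,t]) ↦ [g·x, t], is not continuous (C G with the quotient topology, the domain with the product topology), then the diagonal right action map (G*G) × G → G*G, ([x,y,t], h) ↦ [x·h, y·h, t], is not continuous (G*G with the quotient topology, the domain with the product topology). -/

import Mathlib

open Set

/-- The cone relation on `X × [0,1]`: identify `(x,0) ~ (x',0)`. -/
abbrev coneRel (X : Type*) : X × Icc (0 : ℝ) 1 → X × Icc (0 : ℝ) 1 → Prop :=
  fun p q => p = q ∨ ((p.2 : ℝ) = 0 ∧ (q.2 : ℝ) = 0)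

/-- The cone `C X` with the quotient topology. -/
abbrev Cone (X : Type*) := Quot (coneRel X)

/-- The join relation on `X × Y × [0,1]`: identify `(x,y,0) ~ (x',y,0)` and
`(x,y,1) ~ (x,y',1)`. -/
abbrev joinRel (X Y : Type*) :
    X × Y × Icc (0 : ℝ) 1 → X × Y × Icc (0 : ℝ) 1 → Prop := fun p q =>
  p = q ∨ ((p.2.2 : ℝ) = 0 ∧ (q.2.2 : ℝ) = 0 ∧ p.2.1 = q.2.1)
        ∨ ((p.2.2 : ℝ) = 1 ∧ (q.2.2 : ℝ) = 1 ∧ p.1 = q.1)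

/-- The join `X * Y` with the quotient topology. -/
abbrev Join (X Y : Type*) := Quot (joinRel X Y)

variable (G : Type*) [Group G] [TopologicalSpace G] [IsTopologicalGroup G] [T2Space G]

/-- The translation action `G × C G → C G`, `(g, [x,t]) ↦ [g·x, t]`. -/
def coneAct : G × Cone G → Cone G := fun p =>
  Quot.lift
    (fun x : G × Icc (0 : ℝ) 1 => Quot.mk (coneRel G) (p.1 * x.1, x.2))
    (by
      rintro a b (rfl | ⟨h0a, h0b⟩)
      · rfl
      · exact Quot.sound (Or.inr ⟨h0a, h0b⟩))
    p.2

/-- The diagonal right action `(G * G) × G → G * G`,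
`([x,y,t], h) ↦ [x·h, y·h, t]`. -/
def joinAct : Join G G × G → Join G G := fun p =>
  Quot.lift
    (fun x : G × G × Icc (0 : ℝ) 1 =>
      Quot.mk (joinRel G G) (x.1 * p.2, x.2.1 * p.2, x.2.2))
    (by
      rintro a b (rfl | ⟨h0a, h0b, hy⟩ | ⟨h1a, h1b, hx⟩)
      · rfl
      · exact Quot.sound (Or.inr (Or.inl ⟨h0a, h0b, by rw [hy]⟩))
      · exact Quot.sound (Or.inr (Or.inr ⟨h1a, h1b, by rw [hx]⟩)))
    p.1

/-- Half of a time parameter. -/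
noncomputable def halfT (t : Icc (0 : ℝ) 1) : Icc (0 : ℝ) 1 :=
  ⟨t / 2, by constructor <;> [linarith [t.2.1]; linarith [t.2.2]]⟩

/-- Tent map `s ↦ min (2s) (2 - 2s)`. -/
noncomputable def tentT (s : Icc (0 : ℝ) 1) : Icc (0 : ℝ) 1 :=
  ⟨min (2 * s) (2 - 2 * s), by
    constructor
    · exact le_min (by linarith [s.2.1]) (by linarith [s.2.2])
    · rcases le_total (s : ℝ) (1 / 2) with hs | hs
      · exact (min_le_left _ _).trans (by linarith)
      · exact (min_le_right _ _).trans (by linarith)⟩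

/-- Embedding of the cone into the join: `[x,t] ↦ [x, 1, t/2]`. -/
noncomputable def phiMap : Cone G → Join G G :=
  Quot.lift (fun x : G × Icc (0 : ℝ) 1 => Quot.mk (joinRel G G) (x.1, 1, halfT x.2))
    (by
      rintro a b (rfl | ⟨h0a, h0b⟩)
      · rfl
      · refine Quot.sound (Or.inr (Or.inl ⟨?_, ?_, rfl⟩)) <;>
          simp [halfT, h0a, h0b])

/-- Retraction from the join onto the cone: `[u,v,s] ↦ [v·u·v⁻¹, min(2s, 2-2s)]`. -/
noncomputable def thetaMap : Join G G → Cone G :=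
  Quot.lift
    (fun x : G × G × Icc (0 : ℝ) 1 =>
      Quot.mk (coneRel G) (x.2.1 * x.1 * x.2.1⁻¹, tentT x.2.2))
    (by
      rintro a b (rfl | ⟨h0a, h0b, _⟩ | ⟨h1a, h1b, _⟩)
      · rfl
      · refine Quot.sound (Or.inr ⟨?_, ?_⟩) <;> simp [tentT, h0a, h0b]
      · refine Quot.sound (Or.inr ⟨?_, ?_⟩) <;> simp [tentT, h1a, h1b])

lemma continuous_phiMap : Continuous (phiMap G) := by
  refine continuous_quot_lift _ ?_
  refine Continuous.comp (continuous_quot_mk) ?_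
  refine continuous_fst.prodMk (Continuous.prodMk continuous_const ?_)
  exact Continuous.subtype_mk (by fun_prop) _

lemma continuous_thetaMap : Continuous (thetaMap G) := by
  refine continuous_quot_lift _ ?_
  refine Continuous.comp (continuous_quot_mk) ?_
  refine Continuous.prodMk (by fun_prop) ?_
  exact Continuous.subtype_mk (by fun_prop) _

lemma coneAct_factor :
    coneAct G = thetaMap G ∘ joinAct G ∘ (fun p : G × Cone G => (phiMap G p.2, p.1)) := by
  funext p
  obtain ⟨g, c⟩ := p
  induction c using Quot.ind with
  | _ x =>
    obtain ⟨x, t⟩ := x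
    show Quot.mk (coneRel G) (g * x, t)
        = Quot.mk (coneRel G) (1 * g * (x * g) * (1 * g)⁻¹, tentT (halfT t))
    congr 1
    refine Prod.ext ?_ ?_
    · simp [mul_assoc]
    · apply Subtype.ext
      show (t : ℝ) = min (2 * ((t : ℝ) / 2)) (2 - 2 * ((t : ℝ) / 2))
      rw [min_eq_left (by linarith [t.2.2])]
      ring

/-- If a Hausdorff topological group acts discontinuously on its
quotient-topologized cone, then its diagonal right action on the
quotient-topologized join `G * G` is also discontinuous. -/
theorem joinAct_not_continuous_of_coneAct_not_continuous
    (h : ¬ Continuous (coneAct G)) : ¬ Continuous (joinAct G) := by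
  intro hj
  apply h
  rw [coneAct_factor]
  exact (continuous_thetaMap G).comp
    (hj.comp ((((continuous_phiMap G).comp continuous_snd)).prodMk continuous_fst))
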